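/- Let Γ(G) be a graph product of nontrivial countable groups over a finite simple graph Γ. Then ⋂_{v ∈ V(Γ)} c₀(Γ(G), {Γ_{S_v}(G)}) = c₀(Γ(G)); that is, if a bounded function f : Γ(G) → ℂ satisfies f(g_n) → 0 for every vertex v and every sequence (g_n) in Γ(G) going to infinity relative to {Γ_{S_v}(G)}, then f vanishes at infinity. -/

import Mathlib

open scoped Pointwise ComplexOrder

namespace PPx

universe u v w

/-- A function `G → ℂ` is bounded, i.e. belongs to `ℓ^∞(G)`. -/
def Bdd {G : Type*} (f : G → ℂ) : Prop := ∃ C : ℝ, ∀ x, ‖f x‖ ≤ C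

/-- A sequence `g : ℕ → G` goes to infinity relative to the family of subgroups `S`:
for every `H ∈ S` and `t₁ t₂ : G`, `gₙ ∈ t₁ H t₂` for only finitely many `n`. -/
def TendstoInftyRel {G : Type*} [Group G] (S : Set (Subgroup G)) (g : ℕ → G) : Prop :=
  ∀ H ∈ S, ∀ t₁ t₂ : G, {n : ℕ | ∃ h ∈ H, g n = t₁ * h * t₂}.Finite

/-- `f` belongs to `c₀(G, S)`: `f` is bounded and `f(gₙ) → 0` whenever `gₙ → ∞/S`. -/
def MemC0Rel {G : Type*} [Group G] (S : Set (Subgroup G)) (f : G → ℂ) : Prop :=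
  Bdd f ∧ ∀ g : ℕ → G, TendstoInftyRel S g →
    Filter.Tendsto (fun n => f (g n)) Filter.atTop (nhds 0)

/-- `f` represents a right-translation-fixed element of `ℓ^∞(G)/c₀(G,S)`. -/
def MemFixQuot {G : Type*} [Group G] (S : Set (Subgroup G)) (f : G → ℂ) : Prop :=
  Bdd f ∧ ∀ h : G, MemC0Rel S (fun x => f (x * h) - f x)

/-- `φ` encodes a left-translation-invariant state on the C*-algebra of
right-translation-fixed elements of `ℓ^∞(G)/c₀(G,S)`. -/
def IsInvariantStateRel {G : Type*} [Group G] (S : Set (Subgroup G))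
    (φ : (G → ℂ) → ℂ) : Prop :=
  (∀ f₁ f₂, MemFixQuot S f₁ → MemFixQuot S f₂ → φ (f₁ + f₂) = φ f₁ + φ f₂) ∧
  (∀ (c : ℂ) (f), MemFixQuot S f → φ (c • f) = c * φ f) ∧
  (∀ f, MemFixQuot S f → 0 ≤ φ (star f * f)) ∧
  φ 1 = 1 ∧
  (∀ f, MemC0Rel S f → φ f = 0) ∧
  (∀ (h : G) (f), MemFixQuot S f → φ (fun x => f (h⁻¹ * x)) = φ f)

/-- `G` is properly proximal relative to the family of subgroups `S`. -/
def ProperlyProximalRel (G : Type*) [Group G] (S : Set (Subgroup G)) : Prop :=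
  ¬ ∃ φ : (G → ℂ) → ℂ, IsInvariantStateRel S φ

/-- `G` is properly proximal. -/
def ProperlyProximal (G : Type*) [Group G] : Prop :=
  ProperlyProximalRel G {⊥}

/-- The set of commutation relators defining a graph product. -/
def graphProductRels {V : Type u} (Γ : SimpleGraph V) (Gv : V → Type v)
    [∀ a, Group (Gv a)] : Set (Monoid.CoprodI Gv) :=
  {x | ∃ u w : V, Γ.Adj u w ∧ ∃ (g : Gv u) (h : Gv w),
    x = Monoid.CoprodI.of g * Monoid.CoprodI.of h *
        (Monoid.CoprodI.of g)⁻¹ * (Monoid.CoprodI.of h)⁻¹}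

/-- The graph product `Γ(G)` of the family of groups `Gv` over the graph `Γ`. -/
def GraphProduct {V : Type u} (Γ : SimpleGraph V) (Gv : V → Type v)
    [∀ a, Group (Gv a)] : Type (max u v) :=
  Monoid.CoprodI Gv ⧸ Subgroup.normalClosure (graphProductRels Γ Gv)

instance {V : Type u} (Γ : SimpleGraph V) (Gv : V → Type v) [∀ a, Group (Gv a)] :
    Group (GraphProduct Γ Gv) :=
  inferInstanceAs (Group (Monoid.CoprodI Gv ⧸ Subgroup.normalClosure (graphProductRels Γ Gv)))

/-- The graph distance between two vertices, valued in `ℕ∞` (`⊤` if not connected). -/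
noncomputable def graphDist {V : Type u} (Γ : SimpleGraph V) (a b : V) : ℕ∞ :=
  ⨅ p : Γ.Walk a b, (p.length : ℕ∞)

/-- The radius of a graph, `r(Γ) = min_v max_w d(v,w)`, valued in `ℕ∞`. -/
noncomputable def graphRadius {V : Type u} (Γ : SimpleGraph V) : ℕ∞ :=
  ⨅ a : V, ⨆ b : V, graphDist Γ a b


/-- The canonical homomorphism `G_a →* Γ(G)`. -/
def GraphProduct.of {V : Type u} (Γ : SimpleGraph V) (Gv : V → Type v)
    [∀ a, Group (Gv a)] (a : V) : Gv a →* GraphProduct Γ Gv :=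
  (QuotientGroup.mk' (Subgroup.normalClosure (graphProductRels Γ Gv))).comp Monoid.CoprodI.of

/-- For `T ⊆ V(Γ)`, the subgroup `Γ_T(G)` of `Γ(G)` generated by the vertex groups `G_v`
with `v ∈ T`. -/
def GraphProduct.vertexSubgroup {V : Type u} (Γ : SimpleGraph V) (Gv : V → Type v)
    [∀ a, Group (Gv a)] (T : Set V) : Subgroup (GraphProduct Γ Gv) :=
  ⨆ a ∈ T, (GraphProduct.of Γ Gv a).range


namespace GraphProduct

variable {V : Type u} (Γ : SimpleGraph V) (Gv : V → Type v) [∀ a, Group (Gv a)]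

theorem of_apply (a : V) (g : Gv a) :
    of Γ Gv a g = QuotientGroup.mk (Monoid.CoprodI.of g) := rfl

theorem commute_of {u w : V} (h : Γ.Adj u w) (g : Gv u) (k : Gv w) :
    Commute (of Γ Gv u g) (of Γ Gv w k) := by
  have hmem : (Monoid.CoprodI.of g * Monoid.CoprodI.of k * (Monoid.CoprodI.of g)⁻¹ *
      (Monoid.CoprodI.of k)⁻¹) ∈ Subgroup.normalClosure (graphProductRels Γ Gv) :=
    Subgroup.subset_normalClosure ⟨u, w, h, g, k, rfl⟩
  have h1 := (QuotientGroup.eq_one_iff _).2 hmem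
  simp only [QuotientGroup.mk_mul, QuotientGroup.mk_inv] at h1
  have h2 : of Γ Gv u g * of Γ Gv w k * (of Γ Gv u g)⁻¹ = of Γ Gv w k := by
    rwa [mul_inv_eq_one] at h1
  exact mul_inv_eq_iff_eq_mul.mp h2

theorem hom_ext {K : Type w} [Monoid K] {f g : GraphProduct Γ Gv →* K}
    (h : ∀ (a : V) (x : Gv a), f (of Γ Gv a x) = g (of Γ Gv a x)) : f = g :=
  QuotientGroup.monoidHom_ext _ (Monoid.CoprodI.ext_hom _ _ fun i => MonoidHom.ext fun x => h i x)

/-- Universal property packaged for graph products. -/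
def homOfFamily {K : Type w} [Group K] (F : ∀ a, Gv a →* K)
    (hF : ∀ u w, Γ.Adj u w → ∀ g k, Commute (F u g) (F w k)) :
    GraphProduct Γ Gv →* K :=
  QuotientGroup.lift _ (Monoid.CoprodI.lift F) (by
    refine Subgroup.normalClosure_le_normal ?_
    rintro x ⟨u, w, hadj, g, k, rfl⟩
    have hc := (hF u w hadj g k).eq
    simp only [SetLike.mem_coe, MonoidHom.mem_ker, map_mul, map_inv, Monoid.CoprodI.lift_of]
    rw [hc]
    group)

@[simp] theorem homOfFamily_of {K : Type w} [Group K] (F : ∀ a, Gv a →* K)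
    (hF : ∀ u w, Γ.Adj u w → ∀ g k, Commute (F u g) (F w k)) (a : V) (x : Gv a) :
    homOfFamily Γ Gv F hF (of Γ Gv a x) = F a x := by
  show QuotientGroup.lift (Subgroup.normalClosure (graphProductRels Γ Gv))
      (Monoid.CoprodI.lift F) _ (QuotientGroup.mk (Monoid.CoprodI.of x)) = F a x
  rw [QuotientGroup.lift_mk']
  exact Monoid.CoprodI.lift_of F x

theorem mem_iSup_range_of (x : GraphProduct Γ Gv) :
    x ∈ ⨆ a : V, (of Γ Gv a).range := by
  have h : ∀ y : Monoid.CoprodI Gv,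
      (QuotientGroup.mk' (Subgroup.normalClosure (graphProductRels Γ Gv)) y)
        ∈ ⨆ a : V, (of Γ Gv a).range := by
    intro y
    refine Monoid.CoprodI.induction_on
      (motive := fun y => (QuotientGroup.mk' (Subgroup.normalClosure (graphProductRels Γ Gv)) y)
        ∈ ⨆ a : V, (of Γ Gv a).range) y ?_ ?_ ?_
    · rw [map_one]; exact one_mem _
    · intro i g; exact Subgroup.mem_iSup_of_mem i ⟨g, rfl⟩
    · intro x y hx hy; rw [map_mul]; exact mul_mem hx hy
  obtain ⟨y, rfl⟩ := QuotientGroup.mk'_surjective _ x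
  exact h y

theorem eq_one_of_isEmpty [IsEmpty V] (x : GraphProduct Γ Gv) : x = 1 := by
  have h := mem_iSup_range_of Γ Gv x
  rw [iSup_of_empty] at h
  exact Subgroup.mem_bot.mp h

/-- Kill the vertices outside `s`. -/
noncomputable def killHom (s : Set V) :
    GraphProduct Γ Gv →* GraphProduct (Γ.induce s) (fun x => Gv x) := by
  classical
  exact homOfFamily Γ Gv
    (fun a => if h : a ∈ s then of (Γ.induce s) (fun x => Gv x) ⟨a, h⟩ else 1)
    (by
      intro u w hadj g k
      split_ifs with hu hw hw
      · exact commute_of (Γ.induce s) (fun x => Gv x) (u := ⟨u, hu⟩) (w := ⟨w, hw⟩)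
          (by simpa using hadj) g k
      · simp only [MonoidHom.one_apply]; exact Commute.one_right _
      · simp only [MonoidHom.one_apply]; exact Commute.one_left _
      · simp only [MonoidHom.one_apply]; exact Commute.one_right _)

theorem killHom_of_mem {s : Set V} {a : V} (h : a ∈ s) (g : Gv a) :
    killHom Γ Gv s (of Γ Gv a g) = of (Γ.induce s) (fun x => Gv x) ⟨a, h⟩ g := by
  rw [killHom, homOfFamily_of]
  simp [h]

theorem killHom_of_not_mem {s : Set V} {a : V} (h : a ∉ s) (g : Gv a) :
    killHom Γ Gv s (of Γ Gv a g) = 1 := by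
  rw [killHom, homOfFamily_of]
  simp [h]

/-- Include a full subgraph product. -/
noncomputable def inclHom (s : Set V) :
    GraphProduct (Γ.induce s) (fun x => Gv x) →* GraphProduct Γ Gv :=
  homOfFamily _ _ (fun x => of Γ Gv x.1)
    (fun u w hadj g k => commute_of _ _ (by simpa using hadj) g k)

@[simp] theorem inclHom_of (s : Set V) (x : s) (g : Gv x.1) :
    inclHom Γ Gv s (of (Γ.induce s) (fun x => Gv x) x g) = of Γ Gv x.1 g :=
  homOfFamily_of _ _ _ _ _ _

/-- Transfer between two full subgraph products, killing what is not in the target. -/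
noncomputable def moveHom (s t : Set V) :
    GraphProduct (Γ.induce s) (fun x => Gv x) →* GraphProduct (Γ.induce t) (fun x => Gv x) := by
  classical
  exact homOfFamily _ _
    (fun x => if h : (x : V) ∈ t then of (Γ.induce t) (fun x => Gv x) ⟨x, h⟩ else 1)
    (by
      intro u w hadj g k
      split_ifs with hu hw hw
      · exact commute_of (Γ.induce t) (fun x => Gv x) (u := ⟨u.1, hu⟩) (w := ⟨w.1, hw⟩)
          (by simp only [SimpleGraph.comap_adj] at hadj ⊢; exact hadj) g k
      · simp only [MonoidHom.one_apply]; exact Commute.one_right _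
      · simp only [MonoidHom.one_apply]; exact Commute.one_left _
      · simp only [MonoidHom.one_apply]; exact Commute.one_right _)

theorem killHom_inclHom (s : Set V) (y : GraphProduct (Γ.induce s) (fun x => Gv x)) :
    killHom Γ Gv s (inclHom Γ Gv s y) = y := by
  have : (killHom Γ Gv s).comp (inclHom Γ Gv s) = MonoidHom.id _ := by
    refine hom_ext _ _ ?_
    intro x g
    simp only [MonoidHom.comp_apply, MonoidHom.id_apply, inclHom_of]
    rw [killHom_of_mem Γ Gv x.2]
  exact DFunLike.congr_fun this y

theorem moveHom_killHom {s t : Set V} (hts : t ⊆ s) (y : GraphProduct Γ Gv) :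
    moveHom Γ Gv s t (killHom Γ Gv s y) = killHom Γ Gv t y := by
  have : (moveHom Γ Gv s t).comp (killHom Γ Gv s) = killHom Γ Gv t := by
    refine hom_ext _ _ ?_
    intro a g
    by_cases ha : a ∈ s
    · simp only [MonoidHom.comp_apply]
      rw [killHom_of_mem Γ Gv ha]
      by_cases hat : a ∈ t
      · rw [killHom_of_mem Γ Gv hat, moveHom, homOfFamily_of]
        simp [hat]
      · rw [killHom_of_not_mem Γ Gv hat, moveHom, homOfFamily_of]
        simp [hat]
    · simp only [MonoidHom.comp_apply]
      rw [killHom_of_not_mem Γ Gv ha, killHom_of_not_mem Γ Gv (fun hat => ha (hts hat)),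
        map_one]
  exact DFunLike.congr_fun this y

theorem range_inclHom (s : Set V) :
    (inclHom Γ Gv s).range = vertexSubgroup Γ Gv s := by
  apply le_antisymm
  · rintro x ⟨y, rfl⟩
    refine Subgroup.iSup_induction (x := y)
      (fun x : s => (of (Γ.induce s) (fun x => Gv x) x).range)
      (C := fun z => inclHom Γ Gv s z ∈ vertexSubgroup Γ Gv s)
      (mem_iSup_range_of _ _ y) ?_ ?_ ?_
    · rintro i z ⟨g, rfl⟩
      rw [inclHom_of]
      exact le_iSup₂ (f := fun (a : V) (_ : a ∈ s) => (of Γ Gv a).range) i.1 i.2 ⟨g, rfl⟩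
    · rw [map_one]; exact one_mem _
    · intro z w hz hw
      rw [map_mul]; exact mul_mem hz hw
  · refine iSup₂_le ?_
    rintro a ha z ⟨g, rfl⟩
    exact ⟨of (Γ.induce s) (fun x => Gv x) ⟨a, ha⟩ g, inclHom_of Γ Gv s ⟨a, ha⟩ g⟩

theorem map_vertexSubgroup_killHom_le (s T : Set V) :
    (vertexSubgroup Γ Gv T).map (killHom Γ Gv s) ≤
      vertexSubgroup (Γ.induce s) (fun x => Gv x) {x : s | (x : V) ∈ T} := by
  show Subgroup.map _ (⨆ a ∈ T, _) ≤ _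
  rw [Subgroup.map_iSup]
  refine iSup_le ?_
  intro a
  rw [Subgroup.map_iSup]
  refine iSup_le ?_
  intro ha
  rw [← MonoidHom.range_comp]
  by_cases hs : a ∈ s
  · have : (killHom Γ Gv s).comp (of Γ Gv a) =
        of (Γ.induce s) (fun x => Gv x) ⟨a, hs⟩ :=
      MonoidHom.ext fun g => killHom_of_mem Γ Gv hs g
    rw [this]
    exact le_iSup₂ (f := fun (x : s) (_ : (x : V) ∈ T) =>
      (of (Γ.induce s) (fun x => Gv x) x).range) (⟨a, hs⟩ : s) ha
  · have : (killHom Γ Gv s).comp (of Γ Gv a) = 1 :=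
      MonoidHom.ext fun g => killHom_of_not_mem Γ Gv hs g
    rw [this, MonoidHom.range_one]
    exact bot_le

theorem conj_mem_trivial :
    ∀ (n : ℕ) {V : Type u} [Fintype V] (Γ : SimpleGraph V) (Gv : V → Type v)
      [∀ a, Group (Gv a)], Fintype.card V ≤ n →
      ∀ (t : V → GraphProduct Γ Gv) (x : GraphProduct Γ Gv),
      (∀ a : V, (t a)⁻¹ * x * t a ∈ vertexSubgroup Γ Gv (Γ.neighborSet a)) → x = 1 := by
  intro n
  induction n with
  | zero =>
    intro V _ Γ Gv _ hcard t x _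
    have : IsEmpty V := Fintype.card_eq_zero_iff.mp (Nat.le_zero.mp hcard)
    exact eq_one_of_isEmpty Γ Gv x
  | succ n ih =>
    intro V _ Γ Gv _ hcard t x hx
    rcases isEmpty_or_nonempty V with hV | hV
    · exact eq_one_of_isEmpty Γ Gv x
    classical
    obtain ⟨b⟩ := hV
    set s : Set V := {v | v ≠ b} with hs
    set π := killHom Γ Gv s with hπ
    have hcard' : Fintype.card s ≤ n := by
      have hlt : Fintype.card s < Fintype.card V :=
        Fintype.card_subtype_lt (x := b) (p := fun v => v ∈ s) (by simp [hs])
      omega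
    have hπx : π x = 1 := by
      refine ih (Γ.induce s) (fun x => Gv x) hcard' (fun a => π (t a)) (π x) ?_
      intro a
      have h2 : π ((t a.1)⁻¹ * x * t a.1) ∈
          (vertexSubgroup Γ Gv (Γ.neighborSet a.1)).map π :=
        Subgroup.mem_map_of_mem _ (hx a.1)
      have h3 := map_vertexSubgroup_killHom_le Γ Gv s (Γ.neighborSet a.1) h2
      have hset : {y : s | (y : V) ∈ Γ.neighborSet a.1} =
          (Γ.induce s).neighborSet a := by
        ext y
        simp [SimpleGraph.mem_neighborSet]
      rw [hset] at h3
      simpa [map_mul, map_inv] using h3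
    set N : Set V := Γ.neighborSet b with hN
    have hNs : N ⊆ s := fun w hw => hw.ne'
    have hb := hx b
    rw [← range_inclHom] at hb
    obtain ⟨z, hz⟩ := hb
    have h1 : killHom Γ Gv N ((t b)⁻¹ * x * t b) = 1 := by
      rw [← moveHom_killHom Γ Gv hNs]
      have : π ((t b)⁻¹ * x * t b) = (π (t b))⁻¹ * (π (t b)) := by
        rw [hπ]
        rw [map_mul, map_mul, map_inv, hπx, mul_one]
      rw [← hπ, this]
      simp
    rw [← hz, killHom_inclHom] at h1
    rw [h1, map_one] at hz
    have : x = t b * ((t b)⁻¹ * x * t b) * (t b)⁻¹ := by group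
    rw [this, ← hz]
    group

end GraphProduct

/-- For a graph product of nontrivial countable groups over a finite simple graph,
`⋂_{v ∈ V(Γ)} c₀(Γ(G), {Γ_{S_v}(G)}) = c₀(Γ(G))`: a bounded function which vanishes along
every sequence going to infinity relative to each link subgroup `Γ_{S_v}(G)` vanishes at
infinity. -/
theorem iInter_memC0Rel_linkSubgroup_eq_c0
    {V : Type u} [Fintype V] (Γ : SimpleGraph V) (Gv : V → Type v)
    [∀ a, Group (Gv a)] [∀ a, Nontrivial (Gv a)] [∀ a, Countable (Gv a)] :
    (⋂ a : V, {f : GraphProduct Γ Gv → ℂ |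
        MemC0Rel {GraphProduct.vertexSubgroup Γ Gv (Γ.neighborSet a)} f}) =
      {f : GraphProduct Γ Gv → ℂ | MemC0Rel {⊥} f} := by
  ext f
  simp only [Set.mem_iInter, Set.mem_setOf_eq]
  constructor
  · intro hf
    rcases isEmpty_or_nonempty V with hV | hV
    · refine ⟨⟨‖f 1‖, fun x => by rw [GraphProduct.eq_one_of_isEmpty Γ Gv x]⟩, ?_⟩
      intro g hg
      exfalso
      have hfin := hg ⊥ rfl 1 1
      have huniv : {n : ℕ | ∃ h ∈ (⊥ : Subgroup (GraphProduct Γ Gv)), g n = 1 * h * 1} =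
          Set.univ :=
        Set.eq_univ_of_forall fun n => ⟨1, Subgroup.mem_bot.mpr rfl, by
          rw [GraphProduct.eq_one_of_isEmpty Γ Gv (g n)]; simp⟩
      rw [huniv] at hfin
      exact Set.infinite_univ hfin
    · classical
      refine ⟨(hf (Classical.arbitrary V)).1, ?_⟩
      intro g hg
      by_contra hnot
      rw [NormedAddCommGroup.tendsto_nhds_zero] at hnot
      push_neg at hnot
      obtain ⟨ε, hε, hfr⟩ := hnot
      rw [Nat.frequently_atTop_iff_infinite] at hfr
      have hproc : ∀ A : Finset V, ∀ s : ℕ → GraphProduct Γ Gv, (∀ n, ε ≤ ‖f (s n)‖) →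
          ∃ φ : ℕ → ℕ, StrictMono φ ∧ ∀ a ∈ A, ∃ t₁ t₂ : GraphProduct Γ Gv, ∀ n,
            ∃ h ∈ GraphProduct.vertexSubgroup Γ Gv (Γ.neighborSet a),
              s (φ n) = t₁ * h * t₂ := by
        intro A
        induction A using Finset.induction_on with
        | empty => intro s hs; exact ⟨id, strictMono_id, fun a ha => absurd ha (by simp)⟩
        | @insert a A ha ih =>
          intro s hs
          obtain ⟨φ, hφ, hA⟩ := ih s hs
          by_cases hT : TendstoInftyRel
              {GraphProduct.vertexSubgroup Γ Gv (Γ.neighborSet a)} (fun n => s (φ n))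
          · exfalso
            have htd := (hf a).2 _ hT
            rw [NormedAddCommGroup.tendsto_nhds_zero] at htd
            obtain ⟨n, hn⟩ := (htd ε hε).exists
            exact absurd (hs (φ n)) (not_le.mpr hn)
          · rw [TendstoInftyRel] at hT
            push_neg at hT
            obtain ⟨H, hH, t₁, t₂, hinf⟩ := hT
            rw [Set.mem_singleton_iff] at hH
            subst hH
            have hinf' : {n : ℕ | ∃ h ∈ GraphProduct.vertexSubgroup Γ Gv (Γ.neighborSet a),
                s (φ n) = t₁ * h * t₂}.Infinite := hinf
            refine ⟨φ ∘ Nat.nth _, hφ.comp (Nat.nth_strictMono hinf'), ?_⟩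
            intro a' ha'
            rcases Finset.mem_insert.mp ha' with rfl | ha'
            · exact ⟨t₁, t₂, fun n => Nat.nth_mem_of_infinite hinf' n⟩
            · obtain ⟨u₁, u₂, hu⟩ := hA a' ha'
              exact ⟨u₁, u₂, fun n => hu (Nat.nth _ n)⟩
      set e : ℕ → ℕ := Nat.nth (fun n => ε ≤ ‖f (g n)‖) with hedef
      have he : StrictMono e := Nat.nth_strictMono hfr
      have hemem : ∀ n, ε ≤ ‖f (g (e n))‖ := fun n => Nat.nth_mem_of_infinite hfr n
      obtain ⟨φ, hφ, hall⟩ := hproc Finset.univ (fun n => g (e n)) hemem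
      choose t₁ t₂ ht using fun a => hall a (Finset.mem_univ a)
      have hconst : ∀ n, g (e (φ n)) = g (e (φ 0)) := by
        intro n
        have hx : ∀ a : V, (t₁ a)⁻¹ * (g (e (φ n)) * (g (e (φ 0)))⁻¹) * t₁ a ∈
            GraphProduct.vertexSubgroup Γ Gv (Γ.neighborSet a) := by
          intro a
          obtain ⟨h, hh, eh⟩ := ht a n
          obtain ⟨h0, hh0, eh0⟩ := ht a 0
          have hrw : (t₁ a)⁻¹ * (g (e (φ n)) * (g (e (φ 0)))⁻¹) * t₁ a = h * h0⁻¹ := by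
            rw [eh, eh0]; group
          rw [hrw]
          exact mul_mem hh (inv_mem hh0)
        have h1 := GraphProduct.conj_mem_trivial (Fintype.card V) Γ Gv le_rfl t₁ _ hx
        rwa [mul_inv_eq_one] at h1
      have hfin := hg ⊥ rfl (g (e (φ 0))) 1
      have hinf2 : {n : ℕ | ∃ h ∈ (⊥ : Subgroup (GraphProduct Γ Gv)),
          g n = g (e (φ 0)) * h * 1}.Infinite :=
        Set.infinite_of_injective_forall_mem (f := fun n : ℕ => e (φ n))
          (he.comp hφ).injective
          (fun n => ⟨1, Subgroup.mem_bot.mpr rfl, by rw [hconst n]; simp⟩)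
      exact hinf2 hfin
  · intro hf a
    refine ⟨hf.1, ?_⟩
    intro g hg
    refine hf.2 g ?_
    intro H hH t₁ t₂
    rw [Set.mem_singleton_iff] at hH
    subst hH
    refine (hg _ rfl t₁ t₂).subset ?_
    rintro n ⟨h, hh, e⟩
    rw [Subgroup.mem_bot] at hh
    subst hh
    exact ⟨1, one_mem _, e⟩

end PPx
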